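/- For finite multisets x and y of natural numbers of the same cardinality, x ≤_m y if and only if the list of elements of x sorted in non-increasing order is ≤_lex the list of elements of y sorted in non-increasing order. -/

import Mathlib

namespace MsetPaper

/-- The maximum element of a multiset of naturals (`0` for the empty multiset). -/
def mmax (s : Multiset ℕ) : ℕ := s.sup

/-- The strict multiset order `x <ₘ y` of the paper: either `x` is empty and `y` is not,
or both are nonempty and either `max x < max y`, or the maxima agree and the multisets
with one occurrence of the maximum removed are again strictly ordered. -/
inductive MLt : Multiset ℕ → Multiset ℕ → Prop
  | empty {y : Multiset ℕ} : y ≠ 0 → MLt 0 y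
  | maxLt {x y : Multiset ℕ} : x ≠ 0 → y ≠ 0 → mmax x < mmax y → MLt x y
  | maxEq {x y : Multiset ℕ} : x ≠ 0 → y ≠ 0 → mmax x = mmax y →
      MLt (x.erase (mmax x)) (y.erase (mmax y)) → MLt x y

/-- The (non-strict) multiset order `x ≤ₘ y`. -/
def MLe (x y : Multiset ℕ) : Prop := MLt x y ∨ x = y

/-- The multiset of values taken by a vector. -/
def msetOf {n : ℕ} (x : Fin n → ℕ) : Multiset ℕ := (List.ofFn x : List ℕ)

/-- The list of elements of a multiset sorted in non-increasing order. -/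
def sortDesc (s : Multiset ℕ) : List ℕ := (s.sort (· ≤ ·)).reverse

/-- Lexicographic order on lists: equal, or at the first position where they differ the
first list has the strictly smaller entry. -/
def LexLe (l₁ l₂ : List ℕ) : Prop := l₁ = l₂ ∨ List.Lex (· < ·) l₁ l₂

lemma mmax_mem {s : Multiset ℕ} (h : s ≠ 0) : mmax s ∈ s := by
  induction s using Multiset.induction with
  | empty => exact absurd rfl h
  | cons a t ih =>
    unfold mmax at *
    rw [Multiset.sup_cons]
    rcases eq_or_ne t 0 with rfl | ht
    · simp
    · rcases le_total a t.sup with hle | hle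
      · rw [sup_eq_right.mpr hle]; exact Multiset.mem_cons_of_mem (ih ht)
      · rw [sup_eq_left.mpr hle]; exact Multiset.mem_cons_self a t

lemma sortDesc_sorted (s : Multiset ℕ) : (sortDesc s).Pairwise (· ≥ ·) := by
  unfold sortDesc
  rw [List.pairwise_reverse]
  exact Multiset.pairwise_sort s (· ≤ ·)

lemma sortDesc_coe (s : Multiset ℕ) : ((sortDesc s : List ℕ) : Multiset ℕ) = s := by
  unfold sortDesc
  rw [Multiset.coe_reverse, Multiset.sort_eq]

instance : IsAntisymm ℕ (· ≥ ·) := ⟨fun _ _ h h' => le_antisymm h' h⟩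

lemma sortDesc_eq_of (l : List ℕ) (hl : l.Pairwise (· ≥ ·)) : sortDesc (↑l) = l :=
  List.Perm.eq_of_pairwise' (sortDesc_sorted _) hl (Quotient.exact (sortDesc_coe (↑l)))

lemma sortDesc_cons (s : Multiset ℕ) (hs : s ≠ 0) :
    sortDesc s = mmax s :: sortDesc (s.erase (mmax s)) := by
  have hmem := mmax_mem hs
  have hsorted : (mmax s :: sortDesc (s.erase (mmax s))).Pairwise (· ≥ ·) := by
    rw [List.pairwise_cons]
    refine ⟨fun b hb => ?_, sortDesc_sorted _⟩
    have : b ∈ s.erase (mmax s) := by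
      rw [← Multiset.mem_coe, sortDesc_coe] at hb; exact hb
    exact Multiset.le_sup (Multiset.mem_of_mem_erase this)
  have hcoe : ((mmax s :: sortDesc (s.erase (mmax s)) : List ℕ) : Multiset ℕ) = s := by
    rw [← Multiset.cons_coe, sortDesc_coe, Multiset.cons_erase hmem]
  calc sortDesc s = sortDesc ↑(mmax s :: sortDesc (s.erase (mmax s))) := by rw [hcoe]
    _ = _ := sortDesc_eq_of _ hsorted

lemma sortDesc_inj {s t : Multiset ℕ} (h : sortDesc s = sortDesc t) : s = t := by
  rw [← sortDesc_coe s, h, sortDesc_coe]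

lemma lex_cons_iff {a b : ℕ} {l l' : List ℕ} :
    List.Lex (· < ·) (a :: l) (b :: l') ↔ a < b ∨ (a = b ∧ List.Lex (· < ·) l l') := by
  constructor
  · intro h
    cases h with
    | rel h => exact Or.inl h
    | cons h => exact Or.inr ⟨rfl, h⟩
  · rintro (h | ⟨rfl, h⟩)
    · exact List.Lex.rel h
    · exact List.Lex.cons h

lemma sortDesc_zero : sortDesc 0 = [] := by
  unfold sortDesc; simp

lemma key : ∀ n (x y : Multiset ℕ), Multiset.card x = n → Multiset.card y = n →
    (MLt x y ↔ List.Lex (· < ·) (sortDesc x) (sortDesc y)) := by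
  intro n
  induction n with
  | zero =>
    intro x y hx hy
    rw [Multiset.card_eq_zero] at hx hy
    subst hx; subst hy
    rw [sortDesc_zero]
    constructor
    · rintro (h | h | h) <;> simp_all
    · intro h; cases h
  | succ n ih =>
    intro x y hx hy
    have hx0 : x ≠ 0 := by rintro rfl; simp at hx
    have hy0 : y ≠ 0 := by rintro rfl; simp at hy
    have hex : Multiset.card (x.erase (mmax x)) = n := by
      rw [Multiset.card_erase_of_mem (mmax_mem hx0), hx]; rfl
    have hey : Multiset.card (y.erase (mmax y)) = n := by
      rw [Multiset.card_erase_of_mem (mmax_mem hy0), hy]; rfl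
    rw [sortDesc_cons x hx0, sortDesc_cons y hy0, lex_cons_iff]
    constructor
    · intro h
      cases h with
      | empty h => exact absurd rfl hx0
      | maxLt _ _ h => exact Or.inl h
      | maxEq _ _ heq h => exact Or.inr ⟨heq, (ih _ _ hex hey).mp h⟩
    · rintro (h | ⟨heq, h⟩)
      · exact MLt.maxLt hx0 hy0 h
      · exact MLt.maxEq hx0 hy0 heq ((ih _ _ hex hey).mpr h)

/-- For multisets of equal cardinality, `x ≤ₘ y` iff the non-increasingly sorted
lists of their elements are lexicographically ordered. -/
theorem stmt6 (x y : Multiset ℕ) (h : Multiset.card x = Multiset.card y) :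
    MLe x y ↔ LexLe (sortDesc x) (sortDesc y) := by
  unfold MLe LexLe
  rw [key (Multiset.card y) x y h rfl]
  constructor
  · rintro (h' | rfl)
    · exact Or.inr h'
    · exact Or.inl rfl
  · rintro (h' | h')
    · exact Or.inr (sortDesc_inj h')
    · exact Or.inl h'

end MsetPaper
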